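/- Fix 0 < a9 < 1/(4d²π). For any φ_d ∈ [ρ_d, 1], it holds that f^E(x) < 2^{−(d+1)} (φ_d² − 2φ_d + (10/a8³) d a9) ‖x_*‖² + 2^{−(d+1)} ‖x_*‖² for all x ∈ B(φ_d x_*, a9 ‖x_*‖), and f^E(x) > 2^{−(d+1)} (φ_d² − 2φ_d ρ_d − 10 d³ a9) ‖x_*‖² + 2^{−(d+1)} ‖x_*‖² for all x ∈ B(−φ_d x_*, a9 ‖x_*‖), where a8 = inf_{d ≥ 2} ρ_d > 0. -/

import Mathlib

open scoped BigOperators NNReal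
open Real Finset Matrix
open scoped Matrix

noncomputable section

namespace CSGen

/-- Euclidean norm of a vector in `ℝ^m`. -/
def enorm {m : ℕ} (v : Fin m → ℝ) : ℝ := Real.sqrt (∑ i, (v i) ^ 2)

/-- Euclidean inner product. -/
def dotp {m : ℕ} (u v : Fin m → ℝ) : ℝ := ∑ i, u i * v i

/-- `relu` applied entrywise. -/
def relu {m : ℕ} (v : Fin m → ℝ) : Fin m → ℝ := fun i => max (v i) 0

/-- Zero out the rows of `W` at which the vector `v` is not positive. -/
def rowFilter {n k : ℕ} (W : Matrix (Fin n) (Fin k) ℝ) (v : Fin n → ℝ) :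
    Matrix (Fin n) (Fin k) ℝ := fun i j => if 0 < v i then W i j else 0

/-- `W_{+,x} = diag(Wx > 0) W`. -/
def posPart {n k : ℕ} (W : Matrix (Fin n) (Fin k) ℝ) (x : Fin k → ℝ) :
    Matrix (Fin n) (Fin k) ℝ := rowFilter W (W.mulVec x)

/-- Spectral norm of a matrix (operator norm w.r.t. Euclidean norms). -/
def specNorm {n k : ℕ} (M : Matrix (Fin n) (Fin k) ℝ) : ℝ :=
  ‖LinearMap.toContinuousLinearMap (Matrix.toEuclideanLin M)‖

/-- The angle `∠(x,y) = arccos(⟨x,y⟩/(‖x‖‖y‖))`. -/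
def ang {k : ℕ} (x y : Fin k → ℝ) : ℝ :=
  Real.arccos (dotp x y / (enorm x * enorm y))

/-- The matrix of the linear map `M_{x̂↔ŷ}` sending `x̂ ↦ ŷ`, `ŷ ↦ x̂`, and
`z ↦ 0` for `z ⊥ span{x,y}`. -/
def swapMat {k : ℕ} (x y : Fin k → ℝ) : Matrix (Fin k) (Fin k) ℝ :=
  let xh := (enorm x)⁻¹ • x
  let yh := (enorm y)⁻¹ • y
  let c := dotp xh yh
  if c = 1 then Matrix.vecMulVec xh xh
  else if c = -1 then -(Matrix.vecMulVec xh xh)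
  else (1 - c ^ 2)⁻¹ •
    (Matrix.vecMulVec xh yh + Matrix.vecMulVec yh xh
      - c • (Matrix.vecMulVec xh xh + Matrix.vecMulVec yh yh))

/-- The matrix `Q_{x,y}`. -/
def Qmat {k : ℕ} (x y : Fin k → ℝ) : Matrix (Fin k) (Fin k) ℝ :=
  ((π - ang x y) / (2 * π)) • (1 : Matrix (Fin k) (Fin k) ℝ)
    + (Real.sin (ang x y) / (2 * π)) • swapMat x y

/-- The Weight Distribution Condition with constant `ε`. -/
def WDC {n k : ℕ} (W : Matrix (Fin n) (Fin k) ℝ) (ε : ℝ) : Prop :=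
  ∀ x y : Fin k → ℝ, x ≠ 0 → y ≠ 0 →
    specNorm ((posPart W x)ᵀ * posPart W y - Qmat x y) ≤ ε

/-- The Range Restricted Isometry Condition of `A` with respect to `G`,
with constant `ε`. -/
def RRIC {m nd k : ℕ} (A : Matrix (Fin m) (Fin nd) ℝ)
    (G : (Fin k → ℝ) → (Fin nd → ℝ)) (ε : ℝ) : Prop :=
  ∀ x1 x2 x3 x4 : Fin k → ℝ,
    |dotp (A.mulVec (G x1 - G x2)) (A.mulVec (G x3 - G x4))
        - dotp (G x1 - G x2) (G x3 - G x4)|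
      ≤ ε * enorm (G x1 - G x2) * enorm (G x3 - G x4)

/-- Output of the `j`-th layer of the network:
`feat n W d = G = relu(W_d ⋯ relu(W_1 x) ⋯)`. -/
def feat (n : ℕ → ℕ) (W : ∀ i : ℕ, Matrix (Fin (n (i + 1))) (Fin (n i)) ℝ) :
    (j : ℕ) → (Fin (n 0) → ℝ) → (Fin (n j) → ℝ)
  | 0, x => x
  | (j + 1), x => relu ((W j).mulVec (feat n W j x))

/-- The matrix product `∏_{i=j}^{1} W_{i,+,x}`. -/
def lam (n : ℕ → ℕ) (W : ∀ i : ℕ, Matrix (Fin (n (i + 1))) (Fin (n i)) ℝ) :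
    (j : ℕ) → (Fin (n 0) → ℝ) → Matrix (Fin (n j)) (Fin (n 0)) ℝ
  | 0, _ => 1
  | (j + 1), x => rowFilter (W j) ((W j).mulVec (feat n W j x)) * lam n W j x

/-- The empirical risk `f(x) = (1/2)‖A G(x) − (A G(x_*) + e)‖²`. -/
def fobj {m : ℕ} (n : ℕ → ℕ) (W : ∀ i : ℕ, Matrix (Fin (n (i + 1))) (Fin (n i)) ℝ)
    (d : ℕ) (A : Matrix (Fin m) (Fin (n d)) ℝ) (xs : Fin (n 0) → ℝ) (e : Fin m → ℝ)
    (x : Fin (n 0) → ℝ) : ℝ :=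
  (1 / 2) * (enorm (A.mulVec (feat n W d x) - (A.mulVec (feat n W d xs) + e))) ^ 2

/-- `ṽ_x = (∏ W_{i,+,x})ᵀ Aᵀ (A (∏ W_{i,+,x}) x − y)`. -/
def vtil {m : ℕ} (n : ℕ → ℕ) (W : ∀ i : ℕ, Matrix (Fin (n (i + 1))) (Fin (n i)) ℝ)
    (d : ℕ) (A : Matrix (Fin m) (Fin (n d)) ℝ) (xs : Fin (n 0) → ℝ) (e : Fin m → ℝ)
    (x : Fin (n 0) → ℝ) : Fin (n 0) → ℝ :=
  Matrix.mulVec (lam n W d x)ᵀ (Matrix.mulVec Aᵀ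
    (A.mulVec ((lam n W d x).mulVec x) - (A.mulVec (feat n W d xs) + e)))

/-- `g(θ) = arccos((1/π)[(π−θ)cos θ + sin θ])`. -/
def gfun (θ : ℝ) : ℝ := Real.arccos ((1 / π) * ((π - θ) * Real.cos θ + Real.sin θ))

/-- `θ̄_{i,x,y}`. -/
def thetaBar {k : ℕ} (x y : Fin k → ℝ) : ℕ → ℝ
  | 0 => ang x y
  | (i + 1) => gfun (thetaBar x y i)

/-- `h̃_{x,y}` for a `d`-layer network. -/
def htil {k : ℕ} (d : ℕ) (x y : Fin k → ℝ) : Fin k → ℝ :=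
  (((2 : ℝ) ^ d)⁻¹ * ∏ i ∈ Finset.range d, (π - thetaBar x y i) / π) • y
    + (((2 : ℝ) ^ d)⁻¹ * ∑ i ∈ Finset.range d, (Real.sin (thetaBar x y i) / π)
        * ∏ j ∈ Finset.Ico (i + 1) d, (π - thetaBar x y j) / π) •
        (enorm y • (enorm x)⁻¹ • x)

/-- `h_{x,y} = 2^{−d} x − h̃_{x,y}`. -/
def hfun {k : ℕ} (d : ℕ) (x y : Fin k → ℝ) : Fin k → ℝ :=
  ((2 : ℝ) ^ d)⁻¹ • x - htil d x y

/-- `θ̌_i` with `θ̌_0 = π`. -/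
def thetaCheck : ℕ → ℝ
  | 0 => π
  | (i + 1) => gfun (thetaCheck i)

/-- `ρ_d`. -/
def rho (d : ℕ) : ℝ :=
  ∑ i ∈ Finset.range d, (Real.sin (thetaCheck i) / π)
    * ∏ j ∈ Finset.Ico (i + 1) d, (π - thetaCheck j) / π

/-- The expected risk `f^E`. -/
def fE {k : ℕ} (d : ℕ) (xs : Fin k → ℝ) (x : Fin k → ℝ) : ℝ :=
  ((2 : ℝ) ^ (d + 1))⁻¹ * dotp x x - dotp x (htil d x xs)
    + ((2 : ℝ) ^ (d + 1))⁻¹ * dotp xs xs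

/-- Closed ball of radius `r` about `z` in the Euclidean norm. -/
def cball {k : ℕ} (z : Fin k → ℝ) (r : ℝ) : Set (Fin k → ℝ) :=
  {x | enorm (x - z) ≤ r}

/-- The set `S_β`. -/
def Sset {k : ℕ} (d : ℕ) (xs : Fin k → ℝ) (β : ℝ) : Set (Fin k → ℝ) :=
  {x | x ≠ 0 ∧ enorm (hfun d x xs) ≤ ((2 : ℝ) ^ d)⁻¹ * β * max (enorm x) (enorm xs)}


/-! ### Auxiliary lemmas for `statement_13` -/

lemma hh_hasDeriv (s : ℝ) :
    HasDerivAt (fun s : ℝ => Real.sin s - s * Real.cos s) (s * Real.sin s) s := by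
  have h := (Real.hasDerivAt_sin s).sub ((hasDerivAt_id s).mul (Real.hasDerivAt_cos s))
  simp only [id_eq] at h
  exact h.congr_deriv (by ring)

lemma hh_mono : MonotoneOn (fun s : ℝ => Real.sin s - s * Real.cos s) (Set.Icc 0 π) := by
  apply monotoneOn_of_deriv_nonneg (convex_Icc 0 π)
  · exact ((Real.continuous_sin.sub (continuous_id.mul Real.continuous_cos))).continuousOn
  · intro s _
    exact (hh_hasDeriv s).differentiableAt.differentiableWithinAt
  · intro s hs
    rw [interior_Icc] at hs
    rw [(hh_hasDeriv s).deriv]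
    exact mul_nonneg hs.1.le (Real.sin_nonneg_of_nonneg_of_le_pi hs.1.le hs.2.le)

lemma phi_anti :
    AntitoneOn (fun s : ℝ => Real.sin s - s * Real.cos s + π * Real.cos s) (Set.Icc 0 π) := by
  apply antitoneOn_of_deriv_nonpos (convex_Icc 0 π)
  · exact ((Real.continuous_sin.sub (continuous_id.mul Real.continuous_cos)).add
      (continuous_const.mul Real.continuous_cos)).continuousOn
  · intro s _
    exact ((hh_hasDeriv s).add
      ((Real.hasDerivAt_cos s).const_mul π)).differentiableAt.differentiableWithinAt
  · intro s hs
    rw [interior_Icc] at hs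
    rw [HasDerivAt.deriv (f' := s * Real.sin s + π * -Real.sin s)
      (by exact (hh_hasDeriv s).add ((Real.hasDerivAt_cos s).const_mul π))]
    have h1 : 0 ≤ Real.sin s := Real.sin_nonneg_of_nonneg_of_le_pi hs.1.le hs.2.le
    nlinarith [hs.2, Real.pi_pos]

lemma hh_mem {s : ℝ} (hs : s ∈ Set.Icc 0 π) :
    Real.sin s - s * Real.cos s ∈ Set.Icc 0 π := by
  have h0 : (0:ℝ) ∈ Set.Icc 0 π := Set.left_mem_Icc.2 Real.pi_nonneg
  have hπ : π ∈ Set.Icc 0 π := Set.right_mem_Icc.2 Real.pi_nonneg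
  constructor
  · have := hh_mono h0 hs hs.1
    simpa using this
  · have := hh_mono hs hπ hs.2
    simpa using this

/-- `F(θ) = (π − θ) cos θ + sin θ`, so that `cos (g θ) = F θ / π`. -/
def Ffun (θ : ℝ) : ℝ := (π - θ) * Real.cos θ + Real.sin θ

lemma Ffun_eq (θ : ℝ) : Ffun θ = Real.sin (π - θ) - (π - θ) * Real.cos (π - θ) := by
  simp [Ffun, Real.sin_pi_sub, Real.cos_pi_sub]; ring

lemma pi_sub_mem {θ : ℝ} (hθ : θ ∈ Set.Icc 0 π) : π - θ ∈ Set.Icc 0 π := by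
  constructor <;> [linarith [hθ.2]; linarith [hθ.1]]

lemma Ffun_mem {θ : ℝ} (hθ : θ ∈ Set.Icc 0 π) : Ffun θ ∈ Set.Icc 0 π := by
  rw [Ffun_eq]; exact hh_mem (pi_sub_mem hθ)

lemma gfun_eq (θ : ℝ) : gfun θ = Real.arccos (Ffun θ / π) := by
  unfold gfun Ffun; congr 1; ring

lemma gfun_mem (θ : ℝ) : gfun θ ∈ Set.Icc 0 π :=
  ⟨Real.arccos_nonneg _, Real.arccos_le_pi _⟩

lemma cos_gfun {θ : ℝ} (hθ : θ ∈ Set.Icc 0 π) : Real.cos (gfun θ) = Ffun θ / π := by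
  have hF := Ffun_mem hθ
  have hπ := Real.pi_pos
  rw [gfun_eq, Real.cos_arccos]
  · linarith [div_nonneg hF.1 hπ.le]
  · rw [div_le_one hπ]; exact hF.2

lemma cos_gfun_nonneg {θ : ℝ} (hθ : θ ∈ Set.Icc 0 π) : 0 ≤ Real.cos (gfun θ) := by
  rw [cos_gfun hθ]; exact div_nonneg (Ffun_mem hθ).1 Real.pi_pos.le

lemma cos_le_cos_gfun {θ : ℝ} (hθ : θ ∈ Set.Icc 0 π) : Real.cos θ ≤ Real.cos (gfun θ) := by
  rw [cos_gfun hθ, le_div_iff₀ Real.pi_pos]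
  have := (hh_mem hθ).1
  unfold Ffun; nlinarith

lemma cos_gfun_lip {a b : ℝ} (ha : a ∈ Set.Icc 0 π) (hb : b ∈ Set.Icc 0 π) (hab : a ≤ b) :
    Real.cos (gfun b) ≤ Real.cos (gfun a) ∧
    Real.cos (gfun a) - Real.cos (gfun b) ≤ Real.cos a - Real.cos b := by
  have hπ := Real.pi_pos
  have hma := pi_sub_mem ha
  have hmb := pi_sub_mem hb
  have hle : π - b ≤ π - a := by linarith
  rw [cos_gfun ha, cos_gfun hb]
  constructor
  · have hF : Ffun b ≤ Ffun a := by
      rw [Ffun_eq, Ffun_eq]; exact hh_mono hmb hma hle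
    gcongr
  · have key : Ffun a - π * Real.cos a ≤ Ffun b - π * Real.cos b := by
      have h2 := phi_anti hmb hma hle
      rw [Ffun_eq a, Ffun_eq b]
      simp only [Real.cos_pi_sub, Real.sin_pi_sub] at h2 ⊢
      nlinarith [h2]
    rw [← sub_div, div_le_iff₀ hπ]
    linarith

lemma theta_mem (θ : ℕ → ℝ) (h0 : θ 0 ∈ Set.Icc 0 π)
    (hrec : ∀ i, θ (i + 1) = gfun (θ i)) : ∀ i, θ i ∈ Set.Icc 0 π := by
  intro i
  cases i with
  | zero => exact h0
  | succ n => rw [hrec]; exact gfun_mem _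

lemma key_sum (θ : ℕ → ℝ) (h0 : θ 0 ∈ Set.Icc 0 π)
    (hrec : ∀ i, θ (i + 1) = gfun (θ i)) (d : ℕ) :
    (∏ i ∈ Finset.range d, (π - θ i) / π) * Real.cos (θ 0)
      + ∑ i ∈ Finset.range d, (Real.sin (θ i) / π) * ∏ j ∈ Finset.Ico (i + 1) d, (π - θ j) / π
      = Real.cos (θ d) := by
  induction d with
  | zero => simp
  | succ n ih =>
    have hsum : ∑ i ∈ Finset.range (n + 1), (Real.sin (θ i) / π)
          * ∏ j ∈ Finset.Ico (i + 1) (n + 1), (π - θ j) / π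
        = (∑ i ∈ Finset.range n, (Real.sin (θ i) / π)
            * ∏ j ∈ Finset.Ico (i + 1) n, (π - θ j) / π) * ((π - θ n) / π)
          + Real.sin (θ n) / π := by
      rw [Finset.sum_range_succ, Finset.Ico_self, Finset.prod_empty, mul_one, Finset.sum_mul]
      congr 1
      apply Finset.sum_congr rfl
      intro i hi
      rw [Finset.prod_Ico_succ_top (Nat.succ_le_of_lt (Finset.mem_range.1 hi))]
      ring
    rw [Finset.prod_range_succ, hsum, hrec n, cos_gfun (theta_mem θ h0 hrec n)]
    unfold Ffun
    linear_combination ((π - θ n) / π) * ih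

/-! ### Euclidean space transfer lemmas -/

def toE {m : ℕ} (v : Fin m → ℝ) : EuclideanSpace ℝ (Fin m) := (WithLp.equiv 2 (Fin m → ℝ)).symm v

lemma enorm_eq {m : ℕ} (v : Fin m → ℝ) : enorm v = ‖toE v‖ := by
  rw [EuclideanSpace.norm_eq]
  unfold enorm
  congr 1
  apply Finset.sum_congr rfl
  intro i _
  rw [Real.norm_eq_abs, sq_abs]
  rfl

lemma dotp_eq {m : ℕ} (u v : Fin m → ℝ) : dotp u v = inner ℝ (toE u) (toE v) := by
  rw [PiLp.inner_apply]
  unfold dotp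
  apply Finset.sum_congr rfl
  intro i _
  simp [RCLike.inner_apply, toE]
  ring

lemma abs_dotp_le {m : ℕ} (u v : Fin m → ℝ) : |dotp u v| ≤ enorm u * enorm v := by
  rw [dotp_eq, enorm_eq, enorm_eq]; exact abs_real_inner_le_norm _ _

lemma enorm_nonneg {m : ℕ} (v : Fin m → ℝ) : 0 ≤ enorm v := Real.sqrt_nonneg _

lemma enorm_pos {m : ℕ} {v : Fin m → ℝ} (hv : v ≠ 0) : 0 < enorm v := by
  rw [enorm_eq, norm_pos_iff]
  intro h
  exact hv (by simpa [toE] using congrArg (WithLp.equiv 2 (Fin m → ℝ)) h)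

lemma dotp_self {m : ℕ} (v : Fin m → ℝ) : dotp v v = enorm v ^ 2 := by
  rw [dotp_eq, enorm_eq]; exact real_inner_self_eq_norm_sq _

lemma enorm_triangle {m : ℕ} (u v : Fin m → ℝ) : enorm (u + v) ≤ enorm u + enorm v := by
  rw [enorm_eq, enorm_eq, enorm_eq]; exact norm_add_le (toE u) (toE v)

lemma enorm_smul {m : ℕ} (c : ℝ) (v : Fin m → ℝ) : enorm (c • v) = |c| * enorm v := by
  rw [enorm_eq, enorm_eq]
  have : toE (c • v) = c • toE v := rfl
  rw [this, norm_smul, Real.norm_eq_abs]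

lemma enorm_neg {m : ℕ} (v : Fin m → ℝ) : enorm (-v) = enorm v := by
  rw [enorm_eq, enorm_eq]
  have : toE (-v) = -(toE v) := rfl
  rw [this, norm_neg]

lemma enorm_zero {m : ℕ} : enorm (0 : Fin m → ℝ) = 0 := by
  simp [enorm]

lemma dotp_add_right {m : ℕ} (u v w : Fin m → ℝ) : dotp u (v + w) = dotp u v + dotp u w := by
  simp [dotp, mul_add, Finset.sum_add_distrib]

lemma dotp_smul_right {m : ℕ} (c : ℝ) (u v : Fin m → ℝ) : dotp u (c • v) = c * dotp u v := by
  simp [dotp, Finset.mul_sum]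
  apply Finset.sum_congr rfl
  intros; ring

lemma dotp_sub_left {m : ℕ} (u v w : Fin m → ℝ) : dotp (u - v) w = dotp u w - dotp v w := by
  simp [dotp, sub_mul, Finset.sum_sub_distrib]

lemma dotp_smul_left {m : ℕ} (c : ℝ) (u v : Fin m → ℝ) : dotp (c • u) v = c * dotp u v := by
  simp [dotp, Finset.mul_sum]
  apply Finset.sum_congr rfl
  intros; ring

lemma ang_mem {k : ℕ} (x y : Fin k → ℝ) : ang x y ∈ Set.Icc 0 π :=
  ⟨Real.arccos_nonneg _, Real.arccos_le_pi _⟩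

lemma cos_ang {k : ℕ} {x y : Fin k → ℝ} (hx : x ≠ 0) (hy : y ≠ 0) :
    enorm x * enorm y * Real.cos (ang x y) = dotp x y := by
  have hp : 0 < enorm x * enorm y := mul_pos (enorm_pos hx) (enorm_pos hy)
  have hcs := abs_dotp_le x y
  rw [ang, Real.cos_arccos]
  · exact mul_div_cancel₀ _ hp.ne'
  · rw [neg_le, ← neg_div, div_le_one hp]
    cases abs_le.1 hcs with
    | intro h1 h2 => linarith
  · rw [div_le_one hp]
    cases abs_le.1 hcs with
    | intro h1 h2 => linarith

/-! ### Facts about `thetaBar`, `thetaCheck`, `rho` -/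

lemma thetaBar_mem {k : ℕ} (x y : Fin k → ℝ) (i : ℕ) : thetaBar x y i ∈ Set.Icc 0 π :=
  theta_mem (thetaBar x y) (ang_mem x y) (fun _ => rfl) i

lemma thetaCheck_mem (i : ℕ) : thetaCheck i ∈ Set.Icc 0 π :=
  theta_mem thetaCheck (Set.right_mem_Icc.2 Real.pi_nonneg) (fun _ => rfl) i

lemma cos_thetaBar_mono {k : ℕ} (x y : Fin k → ℝ) (d : ℕ) :
    Real.cos (thetaBar x y 0) ≤ Real.cos (thetaBar x y d) := by
  induction d with
  | zero => exact le_refl _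
  | succ n ih => exact ih.trans (cos_le_cos_gfun (thetaBar_mem x y n))

lemma cos_bar_check {k : ℕ} (x y : Fin k → ℝ) (d : ℕ) :
    Real.cos (thetaCheck d) ≤ Real.cos (thetaBar x y d) ∧
    Real.cos (thetaBar x y d) - Real.cos (thetaCheck d) ≤ Real.cos (thetaBar x y 0) + 1 := by
  induction d with
  | zero =>
    constructor
    · show Real.cos π ≤ _
      rw [Real.cos_pi]
      exact Real.neg_one_le_cos _
    · show Real.cos (thetaBar x y 0) - Real.cos π ≤ _
      rw [Real.cos_pi]; linarith
  | succ n ih =>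
    have hle : thetaBar x y n ≤ thetaCheck n := by
      by_contra hcon
      push_neg at hcon
      have := Real.strictAntiOn_cos (thetaCheck_mem n) (thetaBar_mem x y n) hcon
      linarith [ih.1]
    obtain ⟨l1, l2⟩ := cos_gfun_lip (thetaBar_mem x y n) (thetaCheck_mem n) hle
    constructor
    · exact l1
    · show Real.cos (gfun (thetaBar x y n)) - Real.cos (gfun (thetaCheck n)) ≤ _
      linarith [ih.2]

lemma rho_eq {d : ℕ} (hd : 1 ≤ d) : rho d = Real.cos (thetaCheck d) := by
  have h := key_sum thetaCheck (Set.right_mem_Icc.2 Real.pi_nonneg) (fun _ => rfl) d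
  have hP : (∏ i ∈ Finset.range d, (π - thetaCheck i) / π) = 0 :=
    Finset.prod_eq_zero (Finset.mem_range.2 hd) (by simp [thetaCheck])
  rw [hP, zero_mul, zero_add] at h
  exact h

lemma thetaCheck_one : thetaCheck 1 = π / 2 := by
  show gfun π = π / 2
  unfold gfun
  simp [Real.sin_pi, Real.cos_pi, Real.arccos_zero]

lemma cos_thetaCheck_two : Real.cos (thetaCheck 2) = π⁻¹ := by
  have h2 : Real.cos (thetaCheck 2) = Ffun (π / 2) / π := by
    show Real.cos (gfun (thetaCheck 1)) = _
    rw [thetaCheck_one, cos_gfun]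
    constructor
    · positivity
    · linarith [Real.pi_pos]
  rw [h2]
  unfold Ffun
  rw [Real.cos_pi_div_two, Real.sin_pi_div_two]
  simp [one_div]

lemma cos_thetaCheck_ge {d : ℕ} (hd : 2 ≤ d) : π⁻¹ ≤ Real.cos (thetaCheck d) := by
  induction d with
  | zero => omega
  | succ n ih =>
    rcases Nat.lt_or_ge n 2 with h | h
    · have hn : n = 1 := by omega
      subst hn
      rw [cos_thetaCheck_two]
    · exact (ih h).trans (cos_le_cos_gfun (thetaCheck_mem n))

lemma rho_ge {d : ℕ} (hd : 2 ≤ d) : π⁻¹ ≤ rho d := by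
  rw [rho_eq (by omega)]
  exact cos_thetaCheck_ge hd

lemma rho_two : rho 2 = π⁻¹ := by
  rw [rho_eq (by norm_num), cos_thetaCheck_two]

lemma iInf_rho : (⨅ d' : {d' : ℕ // 2 ≤ d'}, rho (d' : ℕ)) = π⁻¹ := by
  apply le_antisymm
  · have hb : BddBelow (Set.range fun d' : {d' : ℕ // 2 ≤ d'} => rho (d' : ℕ)) := by
      refine ⟨π⁻¹, ?_⟩
      rintro y ⟨d', rfl⟩
      exact rho_ge d'.2
    have := ciInf_le hb (⟨2, le_refl 2⟩ : {d' : ℕ // 2 ≤ d'})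
    rwa [rho_two] at this
  · exact le_ciInf fun d' => rho_ge d'.2

/-- The key identity: `⟨x, h̃_{x,y}⟩ = 2^{-d} ‖x‖ ‖y‖ cos θ̄_d`. -/
lemma dotp_htil {k : ℕ} (d : ℕ) {x y : Fin k → ℝ} (hx : x ≠ 0) (hy : y ≠ 0) :
    dotp x (htil d x y) = ((2 : ℝ) ^ d)⁻¹ * (enorm x * enorm y * Real.cos (thetaBar x y d)) := by
  have hxp : 0 < enorm x := enorm_pos hx
  have hyp : 0 < enorm y := enorm_pos hy
  have key := key_sum (thetaBar x y) (ang_mem x y) (fun _ => rfl) d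
  have hc0 : enorm x * enorm y * Real.cos (thetaBar x y 0) = dotp x y := cos_ang hx hy
  unfold htil
  rw [dotp_add_right, dotp_smul_right, dotp_smul_right, dotp_smul_right, dotp_smul_right,
    dotp_self]
  rw [← hc0]
  have hinv : (enorm x)⁻¹ * enorm x ^ 2 = enorm x := by
    field_simp
  calc ((2 : ℝ) ^ d)⁻¹ * (∏ i ∈ Finset.range d, (π - thetaBar x y i) / π)
          * (enorm x * enorm y * Real.cos (thetaBar x y 0))
        + ((2 : ℝ) ^ d)⁻¹ * (∑ i ∈ Finset.range d, Real.sin (thetaBar x y i) / π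
            * ∏ j ∈ Finset.Ico (i + 1) d, (π - thetaBar x y j) / π)
          * (enorm y * ((enorm x)⁻¹ * enorm x ^ 2))
      = ((2 : ℝ) ^ d)⁻¹ * (enorm x * enorm y)
          * ((∏ i ∈ Finset.range d, (π - thetaBar x y i) / π) * Real.cos (thetaBar x y 0)
            + ∑ i ∈ Finset.range d, Real.sin (thetaBar x y i) / π
              * ∏ j ∈ Finset.Ico (i + 1) d, (π - thetaBar x y j) / π) := by
        rw [hinv]; ring
    _ = ((2 : ℝ) ^ d)⁻¹ * (enorm x * enorm y * Real.cos (thetaBar x y d)) := by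
        rw [key]; ring

lemma dotp_add_left {m : ℕ} (u v w : Fin m → ℝ) : dotp (u + v) w = dotp u w + dotp v w := by
  simp [dotp, add_mul, Finset.sum_add_distrib]

set_option maxHeartbeats 2000000 in
theorem statement_13 (d k : ℕ) (hd : 2 ≤ d) (hk : 1 ≤ k)
    (xs : Fin k → ℝ) (hxs : xs ≠ 0) (a9 : ℝ) (h9pos : 0 < a9)
    (h9 : a9 < 1 / (4 * (d : ℝ) ^ 2 * π)) :
    (0 < ⨅ d' : {d' : ℕ // 2 ≤ d'}, rho d') ∧
    ∀ φ : ℝ, rho d ≤ φ → φ ≤ 1 →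
      (∀ x ∈ cball (φ • xs) (a9 * enorm xs),
        fE d xs x < ((2 : ℝ) ^ (d + 1))⁻¹
            * (φ ^ 2 - 2 * φ
                + (10 / (⨅ d' : {d' : ℕ // 2 ≤ d'}, rho d') ^ 3) * (d : ℝ) * a9)
            * enorm xs ^ 2
          + ((2 : ℝ) ^ (d + 1))⁻¹ * enorm xs ^ 2) ∧
      (∀ x ∈ cball (-(φ • xs)) (a9 * enorm xs),
        ((2 : ℝ) ^ (d + 1))⁻¹ * (φ ^ 2 - 2 * φ * rho d - 10 * (d : ℝ) ^ 3 * a9)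
            * enorm xs ^ 2
          + ((2 : ℝ) ^ (d + 1))⁻¹ * enorm xs ^ 2 < fE d xs x) := by
  have hπ3 : (3:ℝ) < π := Real.pi_gt_three
  have hπ4 : π < 3.15 := by
    have := Real.pi_lt_d2
    linarith
  have hπpos : (0:ℝ) < π := by linarith
  have hIinf := iInf_rho
  have hd1 : (1:ℕ) ≤ d := by omega
  have hd2 : (2:ℝ) ≤ (d:ℝ) := by exact_mod_cast hd
  have hrho : rho d = Real.cos (thetaCheck d) := rho_eq hd1
  have hrho_ge : π⁻¹ ≤ rho d := rho_ge hd
  have hrho_le : rho d ≤ 1 := by rw [hrho]; exact Real.cos_le_one _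
  have hrho_pos : 0 < rho d := lt_of_lt_of_le (by positivity) hrho_ge
  have hR : 0 < enorm xs := enorm_pos hxs
  set R := enorm xs with hRdef
  have ha16 : a9 * (16 * π) < 1 := by
    have h1 : 0 < 4 * (d:ℝ)^2 * π := by positivity
    have h3 : a9 * (4 * (d:ℝ)^2 * π) < 1 := (lt_div_iff₀ h1).1 h9
    nlinarith
  have ha9le : a9 < 1/48 := by nlinarith
  set c := ((2:ℝ)^(d+1))⁻¹ with hc
  have hcpos : 0 < c := by positivity
  have hfE : ∀ z : Fin k → ℝ, z ≠ 0 → fE d xs z =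
      c * enorm z ^ 2 - 2 * c * (enorm z * R * Real.cos (thetaBar z xs d)) + c * R ^ 2 := by
    intro z hz
    unfold fE
    rw [dotp_self, dotp_self, dotp_htil d hz hxs]
    have h2 : ((2:ℝ)^d)⁻¹ = 2 * c := by
      rw [hc, pow_succ]
      field_simp
    rw [h2]
  refine ⟨by rw [hIinf]; positivity, ?_⟩
  intro φ hφl hφu
  have hφ_ge : π⁻¹ ≤ φ := le_trans hrho_ge hφl
  have hφ3 : (0.31 : ℝ) < φ := by
    have h1 : (3.15:ℝ)⁻¹ < π⁻¹ := by
      apply inv_strictAnti₀ hπpos hπ4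
    nlinarith
  have hφpos : 0 < φ := by linarith
  have hsm : enorm (φ • xs) = φ * R := by rw [enorm_smul, abs_of_pos hφpos]
  constructor
  · -- ball around φ • xs
    intro x hx
    have hball : enorm (x - φ • xs) ≤ a9 * R := hx
    have hxu : enorm x ≤ (φ + a9) * R := by
      have h := enorm_triangle (x - φ • xs) (φ • xs)
      have he : (x - φ • xs) + φ • xs = x := by abel
      rw [he, hsm] at h
      linarith
    have hxl : (φ - a9) * R ≤ enorm x := by
      have h := enorm_triangle (φ • xs - x) x
      have he : (φ • xs - x) + x = φ • xs := by abel
      rw [he, hsm] at h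
      have h2 : enorm (φ • xs - x) = enorm (x - φ • xs) := by
        rw [← enorm_neg (φ • xs - x)]
        congr 1
        abel
      rw [h2] at h
      linarith
    have hxne : x ≠ 0 := by
      intro h0
      rw [h0, enorm_zero] at hxl
      nlinarith
    have hdotl : (φ - a9) * R^2 ≤ dotp x xs := by
      have hsplit : dotp x xs = dotp (x - φ • xs) xs + φ * dotp xs xs := by
        rw [dotp_sub_left, dotp_smul_left]; ring
      have hcs := abs_dotp_le (x - φ • xs) xs
      have habs : |dotp (x - φ • xs) xs| ≤ a9 * R * R := by
        apply le_trans hcs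
        apply mul_le_mul_of_nonneg_right hball hR.le |>.trans
        exact le_of_eq rfl
      obtain ⟨hl, hu⟩ := abs_le.1 habs
      rw [hsplit, dotp_self, ← hRdef]
      nlinarith
    have hxR : 0 ≤ enorm x * R := mul_nonneg (enorm_nonneg x) hR.le
    have h0 : enorm x * R * Real.cos (thetaBar x xs 0) = dotp x xs := cos_ang hxne hxs
    have hmono := cos_thetaBar_mono x xs d
    have hcosd : (φ - a9) * R^2 ≤ enorm x * R * Real.cos (thetaBar x xs d) := by
      nlinarith [hdotl, h0, hmono, hxR]
    rw [hfE x hxne, hIinf]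
    have hKval : (10:ℝ) / (π⁻¹)^3 = 10 * π^3 := by
      field_simp
    rw [hKval]
    have hsq : enorm x^2 ≤ ((φ+a9)*R)^2 := by
      nlinarith [enorm_nonneg x, hxu]
    have hπ27 : (27:ℝ) ≤ π^3 := by
      have h := pow_le_pow_left₀ (by norm_num : (0:ℝ) ≤ 3) hπ3.le 3
      norm_num at h
      linarith
    have hcoef : 2*φ*a9 + a9^2 + 2*a9 < 10*π^3*(d:ℝ)*a9 := by
      have hp1 : 270*a9 ≤ 10*π^3*a9 := by nlinarith [hπ27, h9pos]
      have hp2 : 10*π^3*a9*2 ≤ 10*π^3*a9*(d:ℝ) := by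
        apply mul_le_mul_of_nonneg_left hd2
        nlinarith [hπ27, h9pos]
      nlinarith [mul_nonneg (sub_nonneg.2 hφu) h9pos.le, mul_pos h9pos h9pos, ha9le, h9pos]
    have hstep : (2*φ*a9 + a9^2 + 2*a9)*R^2 < (10*π^3*(d:ℝ)*a9)*R^2 :=
      mul_lt_mul_of_pos_right hcoef (by positivity)
    have key : enorm x ^ 2 - 2*(enorm x * R * Real.cos (thetaBar x xs d))
        < (φ^2 - 2*φ + 10*π^3*(d:ℝ)*a9)*R^2 := by
      nlinarith [hcosd, hsq, hstep]
    nlinarith [mul_lt_mul_of_pos_left key hcpos]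
  · -- ball around -(φ • xs)
    intro x hx
    have hball : enorm (x + φ • xs) ≤ a9 * R := by
      have h : x - -(φ • xs) = x + φ • xs := by abel
      have := hx
      rw [show (cball (-(φ • xs)) (a9 * R)) = {z | enorm (z - -(φ • xs)) ≤ a9 * R} from rfl] at this
      rw [Set.mem_setOf_eq, h] at this
      exact this
    have hxu : enorm x ≤ (φ + a9) * R := by
      have h := enorm_triangle (x + φ • xs) (-(φ • xs))
      have he : (x + φ • xs) + (-(φ • xs)) = x := by abel
      rw [he, enorm_neg, hsm] at h
      linarith
    have hxl : (φ - a9) * R ≤ enorm x := by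
      have h := enorm_triangle (x + φ • xs) (-x)
      have he : (x + φ • xs) + (-x) = φ • xs := by abel
      rw [he, enorm_neg, hsm] at h
      linarith
    have hxne : x ≠ 0 := by
      intro h0
      rw [h0, enorm_zero] at hxl
      nlinarith
    have hdotu : dotp x xs ≤ -((φ - a9) * R^2) := by
      have hsplit : dotp x xs = dotp (x + φ • xs) xs - φ * dotp xs xs := by
        rw [dotp_add_left, dotp_smul_left]; ring
      have hcs := abs_dotp_le (x + φ • xs) xs
      have habs : |dotp (x + φ • xs) xs| ≤ a9 * R * R := by
        apply le_trans hcs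
        exact mul_le_mul_of_nonneg_right hball hR.le
      obtain ⟨hl, hu⟩ := abs_le.1 habs
      rw [hsplit, dotp_self, ← hRdef]
      nlinarith
    have he0 : 0 ≤ Real.cos (thetaBar x xs 0) + 1 := by
      linarith [Real.neg_one_le_cos (thetaBar x xs 0)]
    have h0 : enorm x * R * Real.cos (thetaBar x xs 0) = dotp x xs := cos_ang hxne hxs
    have heB : (Real.cos (thetaBar x xs 0) + 1) * (φ - a9) ≤ 2 * a9 := by
      have h1 : enorm x * R * (Real.cos (thetaBar x xs 0) + 1) ≤ 2 * a9 * R^2 := by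
        nlinarith [hdotu, hxu, hR, h0]
      have h2 : (Real.cos (thetaBar x xs 0) + 1) * ((φ - a9) * R) ≤
          (Real.cos (thetaBar x xs 0) + 1) * enorm x := by
        exact mul_le_mul_of_nonneg_left hxl he0
      nlinarith [mul_pos hR hR, hR]
    have he7 : Real.cos (thetaBar x xs 0) + 1 ≤ 7 * a9 := by
      nlinarith [heB, he0, hφ3, ha9le, h9pos]
    have hcd_ub : Real.cos (thetaBar x xs d) ≤ rho d + 7 * a9 := by
      have h1 := (cos_bar_check x xs d).2
      linarith [he7, hrho ▸ h1]
    have hcd_nn : 0 ≤ Real.cos (thetaBar x xs d) := by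
      obtain ⟨n, rfl⟩ : ∃ n, d = n + 1 := ⟨d - 1, by omega⟩
      exact cos_gfun_nonneg (thetaBar_mem x xs n)
    have hBub : enorm x * R * Real.cos (thetaBar x xs d) ≤ (φ + a9) * (rho d + 7 * a9) * R^2 := by
      have h1 : enorm x * R ≤ (φ + a9) * R^2 := by nlinarith [hxu, hR]
      have h2 : 0 ≤ enorm x * R := mul_nonneg (enorm_nonneg x) hR.le
      calc enorm x * R * Real.cos (thetaBar x xs d)
          ≤ ((φ + a9) * R^2) * (rho d + 7 * a9) := by
            apply mul_le_mul h1 hcd_ub hcd_nn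
            nlinarith [mul_pos hR hR, hφpos, h9pos]
        _ = (φ + a9) * (rho d + 7 * a9) * R^2 := by ring
    have hd3 : (8:ℝ) ≤ (d:ℝ)^3 := by nlinarith [hd2]
    have hparam : φ^2 - 2*φ*rho d - 10*(d:ℝ)^3*a9
        < (φ - a9)^2 - 2*(φ + a9)*(rho d + 7*a9) := by
      nlinarith [mul_nonneg (by linarith : (0:ℝ) ≤ (d:ℝ)^3 - 8) h9pos.le,
        mul_nonneg (sub_nonneg.2 hφu) h9pos.le,
        mul_nonneg (sub_nonneg.2 hrho_le) h9pos.le,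
        mul_pos h9pos h9pos, ha9le, h9pos, hφpos.le, hrho_pos.le]
    have hsql : ((φ - a9)*R)^2 ≤ enorm x^2 := by
      have h0 : 0 ≤ (φ - a9)*R := mul_nonneg (by linarith) hR.le
      exact pow_le_pow_left₀ h0 hxl 2
    have key2 : (φ^2 - 2*φ*rho d - 10*(d:ℝ)^3*a9)*R^2
        < enorm x^2 - 2*(enorm x * R * Real.cos (thetaBar x xs d)) := by
      have h1 : (φ^2 - 2*φ*rho d - 10*(d:ℝ)^3*a9)*R^2
          < ((φ - a9)^2 - 2*(φ + a9)*(rho d + 7*a9))*R^2 :=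
        mul_lt_mul_of_pos_right hparam (by positivity)
      nlinarith [h1, hsql, hBub]
    rw [hfE x hxne]
    nlinarith [mul_lt_mul_of_pos_left key2 hcpos]

end CSGen
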